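/- For every complex number z such that |z − πn| > π/4 for all integers n, one has e^{|Im z|} < 4·|sin z|. -/

import Mathlib

open Real

lemma abs_sin_sq (z : ℂ) :
    ‖Complex.sin z‖ ^ 2 = Real.sin z.re ^ 2 + Real.sinh z.im ^ 2 := by
  rw [Complex.sq_norm, Complex.sin_eq, Complex.normSq_apply]
  simp only [Complex.add_re, Complex.add_im, Complex.mul_re, Complex.mul_im,
    Complex.I_re, Complex.I_im, Complex.ofReal_re, Complex.ofReal_im,
    Complex.sin_ofReal_re, Complex.sin_ofReal_im, Complex.cos_ofReal_re,
    Complex.cos_ofReal_im, Complex.sinh_ofReal_re, Complex.sinh_ofReal_im,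
    Complex.cosh_ofReal_re, Complex.cosh_ofReal_im]
  have h1 : Real.cosh z.im ^ 2 = Real.sinh z.im ^ 2 + 1 := Real.cosh_sq z.im
  have h2 : Real.sin z.re ^ 2 + Real.cos z.re ^ 2 = 1 := Real.sin_sq_add_cos_sq z.re
  ring_nf
  nlinarith [h1, h2]

set_option maxHeartbeats 1000000 in
theorem stmt_15 (z : ℂ) (h : ∀ n : ℤ, Real.pi / 4 < ‖z - Real.pi * n‖) :
    Real.exp |z.im| < 4 * ‖Complex.sin z‖ := by
  set x := z.re with hx
  set y := z.im with hy
  clear_value x y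
  have habs : ‖Complex.sin z‖ ^ 2 = Real.sin x ^ 2 + Real.sinh y ^ 2 := by
    rw [hx, hy]; exact abs_sin_sq z
  have hA : 0 ≤ ‖Complex.sin z‖ := norm_nonneg _
  -- reduce to squared inequality
  have key : Real.exp |y| ^ 2 < (4 * ‖Complex.sin z‖) ^ 2 → _ :=
    fun hk => lt_of_pow_lt_pow_left₀ 2 (by positivity) hk
  apply key
  rw [mul_pow, habs, ← Real.exp_nat_mul]
  have hsinh_abs : Real.sinh y ^ 2 = Real.sinh |y| ^ 2 := by
    rcases abs_choice y with h' | h' <;> rw [h'] <;> simp [Real.sinh_neg]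
  rcases le_or_gt (1/2 : ℝ) |y| with hyb | hyb
  · -- large |y| : sinh alone suffices
    set t := |y| with ht
    have hsinh : Real.sinh t = (Real.exp t - Real.exp (-t)) / 2 := Real.sinh_eq t
    have hinv : Real.exp t * Real.exp (-t) = 1 := by
      rw [← Real.exp_add]; simp
    have hone : Real.exp 1 ≤ Real.exp t ^ 2 := by
      rw [← Real.exp_nat_mul]
      apply Real.exp_le_exp.2
      push_cast; linarith
    have he1 : (2.7182818283 : ℝ) < Real.exp 1 := Real.exp_one_gt_d9
    have hepos : 0 < Real.exp t := Real.exp_pos t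
    have hemt : 0 < Real.exp (-t) := Real.exp_pos (-t)
    rw [hsinh_abs, hsinh]
    have h2t : ((2:ℕ):ℝ) * t = t + t := by push_cast; ring
    rw [h2t, Real.exp_add]
    nlinarith [sq_nonneg (Real.sin x), sq_nonneg (Real.exp (-t)),
      sq_nonneg (Real.exp t - Real.exp (-t))]
  · -- small |y| : distance to nearest multiple of π
    set n : ℤ := round (x / π) with hn
    set d : ℝ := x - π * n with hd
    clear_value n d
    have hpi : 0 < π := Real.pi_pos
    have hdle : |d| ≤ π / 2 := by
      have := abs_sub_round (x / π)
      have h1 : |x / π - n| ≤ 1 / 2 := by rw [hn]; exact this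
      have h2 : (x / π - n) * π = d := by field_simp [hd]; exact hd.symm
      rw [show |d| = |x / π - n| * π by rw [← h2, abs_mul, abs_of_pos hpi]]
      calc |x / π - n| * π ≤ (1/2) * π := by
            exact mul_le_mul_of_nonneg_right h1 hpi.le
        _ = π / 2 := by ring
    -- distance hypothesis
    have hdist : (π / 4) ^ 2 < d ^ 2 + y ^ 2 := by
      have h1 := h n
      have h2 : ‖z - π * n‖ ^ 2 = d ^ 2 + y ^ 2 := by
        rw [Complex.sq_norm, Complex.normSq_apply]
        simp [Complex.sub_re, Complex.sub_im, hd, hx, hy]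
        ring
      calc (π/4)^2 < ‖z - π * n‖ ^ 2 := by
            apply pow_lt_pow_left₀ h1 (by positivity)
            norm_num
        _ = d ^ 2 + y ^ 2 := h2
    -- sin x ^ 2 = sin d ^ 2
    have hsineq : Real.sin d ^ 2 = Real.sin x ^ 2 := by
      have : Real.sin (x - n * π) = (-1) ^ n * Real.sin x := Real.sin_sub_int_mul_pi x n
      have hd' : d = x - n * π := by rw [hd]; ring
      have h1 : ((-1:ℝ) ^ n) ^ (2:ℕ) = 1 := by
        rw [← zpow_natCast ((-1:ℝ) ^ n) 2, ← zpow_mul, mul_comm, zpow_mul]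
        norm_num
      rw [hd', this, mul_pow, h1, one_mul]
    -- lower bound on sin d
    have hsd : 4 * d ^ 2 ≤ π ^ 2 * Real.sin d ^ 2 := by
      have h1 : 2 / π * |d| ≤ |Real.sin d| := Real.mul_abs_le_abs_sin hdle
      have h2 : 2 * |d| ≤ π * |Real.sin d| := by
        rw [div_mul_eq_mul_div, div_le_iff₀ hpi] at h1
        linarith [h1]
      nlinarith [abs_nonneg d, abs_nonneg (Real.sin d), sq_abs d, sq_abs (Real.sin d)]
    -- sinh y ^ 2 ≥ y ^ 2
    have hsh : y ^ 2 ≤ Real.sinh y ^ 2 := by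
      rw [hsinh_abs, ← sq_abs y]
      rcases eq_or_lt_of_le (abs_nonneg y) with h0 | h0
      · rw [← h0]; simp
      · have := (Real.self_lt_sinh_iff).2 h0
        nlinarith [abs_nonneg y]
    -- exp bound
    have hexp : Real.exp (((2:ℕ):ℝ) * |y|) < 2.7182818286 := by
      calc Real.exp (((2:ℕ):ℝ) * |y|) < Real.exp 1 := by
            apply Real.exp_lt_exp.2; push_cast; linarith
        _ < 2.7182818286 := Real.exp_one_lt_d9
    have hpi2 : π ^ 2 > 9 := by nlinarith [Real.pi_gt_three]
    rw [← hsineq]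
    have hc1 : 4 * π ^ 2 < 64 * d ^ 2 + 64 * y ^ 2 := by nlinarith [hdist]
    have hc2 : 64 * d ^ 2 ≤ 16 * π ^ 2 * Real.sin d ^ 2 := by linarith [hsd]
    have hc3 : 16 * π ^ 2 * y ^ 2 ≤ 16 * π ^ 2 * Real.sinh y ^ 2 := by
      nlinarith [hsh, sq_nonneg π, mul_pos hpi hpi]
    have hc4 : 4 * π ^ 2 < 16 * π ^ 2 * (Real.sin d ^ 2 + Real.sinh y ^ 2) := by
      nlinarith [hc1, hc2, hc3, sq_nonneg y, hpi2]
    have hc5 : (4:ℝ) < 16 * (Real.sin d ^ 2 + Real.sinh y ^ 2) := by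
      nlinarith [hc4, mul_pos hpi hpi]
    calc Real.exp (((2:ℕ):ℝ) * |y|) < 2.7182818286 := hexp
      _ < 4 := by norm_num
      _ < 16 * (Real.sin d ^ 2 + Real.sinh y ^ 2) := hc5
      _ = 4 ^ 2 * (Real.sin d ^ 2 + Real.sinh y ^ 2) := by norm_num
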